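/- For every ν ∈ (-1, -1/2), the number x₀^ν := (2/3)·sqrt( -(6ν³ + 21ν² + 21ν + 6)/(2ν + 3) ) is well-defined (the quantity under the square root is positive) and satisfies x₀^ν < 1/2. -/
import Mathlib


open Real Set

theorem x0_lt_half (ν : ℝ) (hν : ν ∈ Ioo (-1 : ℝ) (-1/2)) :
    0 < -(6*ν^3 + 21*ν^2 + 21*ν + 6) / (2*ν + 3) ∧
    (2/3) * Real.sqrt (-(6*ν^3 + 21*ν^2 + 21*ν + 6) / (2*ν + 3)) < 1/2 := by
  obtain ⟨h1, h2⟩ := hν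
  have hd : (0:ℝ) < 2*ν + 3 := by linarith
  have hnum : (0:ℝ) < -(6*ν^3 + 21*ν^2 + 21*ν + 6) := by
    nlinarith [mul_pos (mul_pos (by linarith : (0:ℝ) < ν + 1) (by linarith : (0:ℝ) < -(2*ν+1))) (by linarith : (0:ℝ) < ν + 2)]
  have hpos : 0 < -(6*ν^3 + 21*ν^2 + 21*ν + 6) / (2*ν + 3) := div_pos hnum hd
  refine ⟨hpos, ?_⟩
  have hlt : -(6*ν^3 + 21*ν^2 + 21*ν + 6) / (2*ν + 3) < (3/4)^2 := by
    rw [div_lt_iff₀ hd]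
    nlinarith [sq_nonneg (ν + 1), sq_nonneg (2*ν + 1), sq_nonneg (ν + 4/5),
      mul_pos (by linarith : (0:ℝ) < ν + 1) (by linarith : (0:ℝ) < -(2*ν+1)),
      mul_nonneg (sq_nonneg (ν + 4/5)) (by linarith : (0:ℝ) ≤ ν + 1)]
  have hs : Real.sqrt (-(6*ν^3 + 21*ν^2 + 21*ν + 6) / (2*ν + 3)) < 3/4 := by
    rw [show ((3:ℝ)/4) = Real.sqrt ((3/4)^2) by rw [Real.sqrt_sq (by norm_num)]]
    exact Real.sqrt_lt_sqrt hpos.le hlt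
  linarith
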